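/- In the ideal hierarchical network without complete diagonal blocks, the number of 3-element subsets of V inducing triad type 021C equals n₀·n₁·n₂; the number inducing 021U equals C(n₀,2)·n₁ + C(n₁,2)·n₂; the number inducing 021D equals n₀·C(n₁,2) + n₁·C(n₂,2); the number inducing 003 equals C(n₀,3)+C(n₁,3)+C(n₂,3)+C(n₀,2)·n₂+n₀·C(n₂,2); and no 3-element subset induces any other triad type. -/

import Mathlib

variable {V : Type*}

/-- Dyad `{i, j}` is mutual: both arcs present. -/
def Mutual (A : V → V → Prop) (i j : V) : Prop := A i j ∧ A j i

/-- Dyad `{i, j}` is null: no arc present. -/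
def NullDyad (A : V → V → Prop) (i j : V) : Prop := ¬ A i j ∧ ¬ A j i

/-- Dyad `{i, j}` is asymmetric: exactly one of the two arcs is present. -/
def AsymDyad (A : V → V → Prop) (i j : V) : Prop :=
  (A i j ∧ ¬ A j i) ∨ (¬ A i j ∧ A j i)

/-- Triad type 003: all three dyads null. -/
def Triad003 (A : V → V → Prop) (i j k : V) : Prop :=
  NullDyad A i j ∧ NullDyad A j k ∧ NullDyad A i k

/-- Triad type 300: all three dyads mutual. -/
def Triad300 (A : V → V → Prop) (i j k : V) : Prop :=
  Mutual A i j ∧ Mutual A j k ∧ Mutual A i k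

/-- Triad type 102: one mutual dyad, both remaining dyads null. -/
def Triad102 (A : V → V → Prop) (i j k : V) : Prop :=
  (Mutual A i j ∧ NullDyad A j k ∧ NullDyad A i k) ∨
  (Mutual A j k ∧ NullDyad A i j ∧ NullDyad A i k) ∨
  (Mutual A i k ∧ NullDyad A i j ∧ NullDyad A j k)

/-- Triad type 201: two mutual dyads, the remaining dyad null. -/
def Triad201 (A : V → V → Prop) (i j k : V) : Prop :=
  (Mutual A i j ∧ Mutual A j k ∧ NullDyad A i k) ∨
  (Mutual A i j ∧ Mutual A i k ∧ NullDyad A j k) ∨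
  (Mutual A j k ∧ Mutual A i k ∧ NullDyad A i j)

/-- Triad type 012: exactly one asymmetric dyad, both remaining dyads null. -/
def Triad012 (A : V → V → Prop) (i j k : V) : Prop :=
  (AsymDyad A i j ∧ NullDyad A j k ∧ NullDyad A i k) ∨
  (AsymDyad A j k ∧ NullDyad A i j ∧ NullDyad A i k) ∨
  (AsymDyad A i k ∧ NullDyad A i j ∧ NullDyad A j k)

/-- Two asymmetric arcs `x → z` and `y → z` with common head `z`, dyad `{x, y}` null. -/
def Head021U (A : V → V → Prop) (x y z : V) : Prop :=
  A x z ∧ A y z ∧ ¬ A z x ∧ ¬ A z y ∧ NullDyad A x y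

/-- Triad type 021U: two asymmetric arcs with a common head, remaining dyad null. -/
def Triad021U (A : V → V → Prop) (i j k : V) : Prop :=
  Head021U A i j k ∨ Head021U A i k j ∨ Head021U A j k i

/-- Two asymmetric arcs `z → x` and `z → y` with common tail `z`, dyad `{x, y}` null. -/
def Tail021D (A : V → V → Prop) (x y z : V) : Prop :=
  A z x ∧ A z y ∧ ¬ A x z ∧ ¬ A y z ∧ NullDyad A x y

/-- Triad type 021D: two asymmetric arcs with a common tail, remaining dyad null. -/
def Triad021D (A : V → V → Prop) (i j k : V) : Prop :=
  Tail021D A i j k ∨ Tail021D A i k j ∨ Tail021D A j k i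

/-- A directed path `x → y → z` with all other arcs among the three vertices absent. -/
def Path021C (A : V → V → Prop) (x y z : V) : Prop :=
  A x y ∧ A y z ∧ ¬ A y x ∧ ¬ A z y ∧ NullDyad A x z

/-- Triad type 021C. -/
def Triad021C (A : V → V → Prop) (i j k : V) : Prop :=
  Path021C A i j k ∨ Path021C A i k j ∨ Path021C A j i k ∨
  Path021C A j k i ∨ Path021C A k i j ∨ Path021C A k j i

/-- Mutual dyad `{x, y}` plus asymmetric arcs from each of `x`, `y` to the third vertex `z`. -/
def Up120 (A : V → V → Prop) (x y z : V) : Prop :=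
  Mutual A x y ∧ A x z ∧ A y z ∧ ¬ A z x ∧ ¬ A z y

/-- Triad type 120U. -/
def Triad120U (A : V → V → Prop) (i j k : V) : Prop :=
  Up120 A i j k ∨ Up120 A i k j ∨ Up120 A j k i

/-- Mutual dyad `{x, y}` plus asymmetric arcs from the third vertex `z` to each of `x`, `y`. -/
def Down120 (A : V → V → Prop) (x y z : V) : Prop :=
  Mutual A x y ∧ A z x ∧ A z y ∧ ¬ A x z ∧ ¬ A y z

/-- Triad type 120D. -/
def Triad120D (A : V → V → Prop) (i j k : V) : Prop :=
  Down120 A i j k ∨ Down120 A i k j ∨ Down120 A j k i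

/-- Transitive triple: arcs `x → y`, `y → z`, `x → z`, with no reverse arcs. -/
def Trans030 (A : V → V → Prop) (x y z : V) : Prop :=
  A x y ∧ A y z ∧ A x z ∧ ¬ A y x ∧ ¬ A z y ∧ ¬ A z x

/-- Triad type 030T. -/
def Triad030T (A : V → V → Prop) (i j k : V) : Prop :=
  Trans030 A i j k ∨ Trans030 A i k j ∨ Trans030 A j i k ∨
  Trans030 A j k i ∨ Trans030 A k i j ∨ Trans030 A k j i

/-- Cyclic triple: arcs `x → y`, `y → z`, `z → x`, with no reverse arcs. -/
def Cycle030 (A : V → V → Prop) (x y z : V) : Prop :=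
  A x y ∧ A y z ∧ A z x ∧ ¬ A y x ∧ ¬ A z y ∧ ¬ A x z

/-- Triad type 030C. -/
def Triad030C (A : V → V → Prop) (i j k : V) : Prop :=
  Cycle030 A i j k ∨ Cycle030 A i k j

/-- The 3-element subset `s` induces the triad type `T`. -/
def InducesTriad [DecidableEq V] (T : V → V → V → Prop) (s : Finset V) : Prop :=
  ∃ i j k : V, i ≠ j ∧ i ≠ k ∧ j ≠ k ∧ s = {i, j, k} ∧ T i j k

/-- The ideal hierarchical network without complete blocks on the diagonal:
an arc from `i` to `j` iff the level of `j` is the level of `i` plus one. -/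
def HierAdj (c : V → Fin 3) (i j : V) : Prop := (c j : ℕ) = (c i : ℕ) + 1


section Aux

/-- Adjacency on levels. -/
def hadj : Fin 3 → Fin 3 → Prop := fun a b => (b : ℕ) = (a : ℕ) + 1

instance : DecidableRel hadj := fun a b => by unfold hadj; infer_instance

instance (x y z : Fin 3) : Decidable (Triad021C hadj x y z) := by
  unfold Triad021C Path021C NullDyad; infer_instance

instance (x y z : Fin 3) : Decidable (Triad021U hadj x y z) := by
  unfold Triad021U Head021U NullDyad; infer_instance

instance (x y z : Fin 3) : Decidable (Triad021D hadj x y z) := by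
  unfold Triad021D Tail021D NullDyad; infer_instance

instance (x y z : Fin 3) : Decidable (Triad003 hadj x y z) := by
  unfold Triad003 NullDyad; infer_instance

/-- Count of a level among three values. -/
def cnt (a b d i : Fin 3) : ℕ :=
  (if a = i then 1 else 0) + (if b = i then 1 else 0) + (if d = i then 1 else 0)

lemma char021C : ∀ a b d : Fin 3, Triad021C hadj a b d ↔
    (cnt a b d 0 = 1 ∧ cnt a b d 1 = 1 ∧ cnt a b d 2 = 1) := by decide

lemma char021U : ∀ a b d : Fin 3, Triad021U hadj a b d ↔
    ((cnt a b d 0 = 2 ∧ cnt a b d 1 = 1 ∧ cnt a b d 2 = 0) ∨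
     (cnt a b d 0 = 0 ∧ cnt a b d 1 = 2 ∧ cnt a b d 2 = 1)) := by decide

lemma char021D : ∀ a b d : Fin 3, Triad021D hadj a b d ↔
    ((cnt a b d 0 = 1 ∧ cnt a b d 1 = 2 ∧ cnt a b d 2 = 0) ∨
     (cnt a b d 0 = 0 ∧ cnt a b d 1 = 1 ∧ cnt a b d 2 = 2)) := by decide

lemma char003 : ∀ a b d : Fin 3, Triad003 hadj a b d ↔
    ((cnt a b d 0 = 3 ∧ cnt a b d 1 = 0 ∧ cnt a b d 2 = 0) ∨
     (cnt a b d 0 = 0 ∧ cnt a b d 1 = 3 ∧ cnt a b d 2 = 0) ∨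
     (cnt a b d 0 = 0 ∧ cnt a b d 1 = 0 ∧ cnt a b d 2 = 3) ∨
     (cnt a b d 0 = 2 ∧ cnt a b d 1 = 0 ∧ cnt a b d 2 = 1) ∨
     (cnt a b d 0 = 1 ∧ cnt a b d 1 = 0 ∧ cnt a b d 2 = 2)) := by decide

lemma charAll : ∀ a b d : Fin 3, Triad021C hadj a b d ∨ Triad021U hadj a b d ∨
    Triad021D hadj a b d ∨ Triad003 hadj a b d := by decide

lemma fin3cases : ∀ a : Fin 3, a = 0 ∨ a = 1 ∨ a = 2 := by decide

variable {V : Type*} [DecidableEq V]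

/-- Number of elements of `s` at level `i`. -/
def Fcnt (c : V → Fin 3) (s : Finset V) (i : Fin 3) : ℕ :=
  (s.filter fun v => c v = i).card

lemma filter_triple {x y z : V} (p : V → Prop) [DecidablePred p]
    (hxy : x ≠ y) (hxz : x ≠ z) (hyz : y ≠ z) :
    (({x, y, z} : Finset V).filter p).card
      = (if p x then 1 else 0) + (if p y then 1 else 0) + (if p z then 1 else 0) := by
  rw [Finset.card_filter]
  rw [show ({x, y, z} : Finset V) = insert x (insert y {z}) from rfl]
  rw [Finset.sum_insert (by simp [hxy, hxz]), Finset.sum_insert (by simp [hyz]),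
    Finset.sum_singleton, add_assoc]

lemma Fcnt_rep (c : V → Fin 3) {x y z : V} (hxy : x ≠ y) (hxz : x ≠ z) (hyz : y ≠ z)
    (i : Fin 3) : Fcnt c {x, y, z} i = cnt (c x) (c y) (c z) i :=
  filter_triple (fun v => c v = i) hxy hxz hyz

lemma card_split (c : V → Fin 3) (s : Finset V) :
    s.card = Fcnt c s 0 + Fcnt c s 1 + Fcnt c s 2 := by
  unfold Fcnt
  rw [Finset.card_filter, Finset.card_filter, Finset.card_filter,
    ← Finset.sum_add_distrib, ← Finset.sum_add_distrib, Finset.card_eq_sum_ones]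
  refine Finset.sum_congr rfl fun v _ => ?_
  rcases fin3cases (c v) with h | h | h <;> simp [h]

lemma triple_card {x y z : V} (hxy : x ≠ y) (hxz : x ≠ z) (hyz : y ≠ z) :
    ({x, y, z} : Finset V).card = 3 := by
  rw [Finset.card_insert_of_notMem (by simp [hxy, hxz]),
    Finset.card_insert_of_notMem (by simp [hyz]), Finset.card_singleton]

lemma eq_triple_of_subset {s : Finset V} {x y z : V} (hxy : x ≠ y) (hxz : x ≠ z) (hyz : y ≠ z)
    (hx : x ∈ s) (hy : y ∈ s) (hz : z ∈ s) (hcard : s.card = 3) : s = {x, y, z} := by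
  refine (Finset.eq_of_subset_of_card_le ?_ ?_).symm
  · intro v hv
    simp only [Finset.mem_insert, Finset.mem_singleton] at hv
    rcases hv with rfl | rfl | rfl <;> assumption
  · rw [triple_card hxy hxz hyz, hcard]

lemma helper1 (c : V → Fin 3) {s : Finset V} {i j k : Fin 3}
    (hij : i ≠ j) (hik : i ≠ k) (hjk : j ≠ k)
    (h0 : Fcnt c s i = 1) (h1 : Fcnt c s j = 1) (h2 : Fcnt c s k = 1) (hcard : s.card = 3) :
    ∃ x y z : V, x ≠ y ∧ x ≠ z ∧ y ≠ z ∧ s = {x, y, z} ∧ c x = i ∧ c y = j ∧ c z = k := by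
  obtain ⟨x, hx⟩ := Finset.card_eq_one.mp h0
  obtain ⟨y, hy⟩ := Finset.card_eq_one.mp h1
  obtain ⟨z, hz⟩ := Finset.card_eq_one.mp h2
  have hxm := Finset.mem_filter.mp (hx ▸ Finset.mem_singleton_self x)
  have hym := Finset.mem_filter.mp (hy ▸ Finset.mem_singleton_self y)
  have hzm := Finset.mem_filter.mp (hz ▸ Finset.mem_singleton_self z)
  have hxy : x ≠ y := fun h => hij (hxm.2 ▸ h ▸ hym.2)
  have hxz : x ≠ z := fun h => hik (hxm.2 ▸ h ▸ hzm.2)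
  have hyz : y ≠ z := fun h => hjk (hym.2 ▸ h ▸ hzm.2)
  exact ⟨x, y, z, hxy, hxz, hyz,
    eq_triple_of_subset hxy hxz hyz hxm.1 hym.1 hzm.1 hcard, hxm.2, hym.2, hzm.2⟩

lemma helper2 (c : V → Fin 3) {s : Finset V} {i j : Fin 3} (hij : i ≠ j)
    (h2 : Fcnt c s i = 2) (h1 : Fcnt c s j = 1) (hcard : s.card = 3) :
    ∃ x y z : V, x ≠ y ∧ x ≠ z ∧ y ≠ z ∧ s = {x, y, z} ∧ c x = i ∧ c y = i ∧ c z = j := by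
  obtain ⟨x, y, hxy, hxyf⟩ := Finset.card_eq_two.mp h2
  obtain ⟨z, hz⟩ := Finset.card_eq_one.mp h1
  have hxm := Finset.mem_filter.mp (hxyf ▸ (Finset.mem_insert_self x {y}))
  have hym := Finset.mem_filter.mp (hxyf ▸ (Finset.mem_insert_of_mem (Finset.mem_singleton_self y)))
  have hzm := Finset.mem_filter.mp (hz ▸ Finset.mem_singleton_self z)
  have hxz : x ≠ z := fun h => hij (hxm.2 ▸ h ▸ hzm.2)
  have hyz : y ≠ z := fun h => hij (hym.2 ▸ h ▸ hzm.2)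
  exact ⟨x, y, z, hxy, hxz, hyz,
    eq_triple_of_subset hxy hxz hyz hxm.1 hym.1 hzm.1 hcard, hxm.2, hym.2, hzm.2⟩

lemma helper3 (c : V → Fin 3) {s : Finset V} {i : Fin 3}
    (h3 : Fcnt c s i = 3) (hcard : s.card = 3) :
    ∃ x y z : V, x ≠ y ∧ x ≠ z ∧ y ≠ z ∧ s = {x, y, z} ∧ c x = i ∧ c y = i ∧ c z = i := by
  have h3' : (s.filter fun v => c v = i).card = 3 := h3
  have hfs : s.filter (fun v => c v = i) = s :=
    Finset.eq_of_subset_of_card_le (Finset.filter_subset _ _) (by rw [h3', hcard])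
  have hall : ∀ v ∈ s, c v = i := fun v hv => by
    rw [← hfs] at hv; exact (Finset.mem_filter.mp hv).2
  obtain ⟨x, y, z, hxy, hxz, hyz, hs⟩ := Finset.card_eq_three.mp hcard
  subst hs
  exact ⟨x, y, z, hxy, hxz, hyz, rfl, hall x (by simp), hall y (by simp), hall z (by simp)⟩

lemma filter_of_levels (c : V → Fin 3) {t₀ t₁ t₂ : Finset V}
    (m0 : ∀ v ∈ t₀, c v = 0) (m1 : ∀ v ∈ t₁, c v = 1) (m2 : ∀ v ∈ t₂, c v = 2) :
    (t₀ ∪ t₁ ∪ t₂).filter (fun v => c v = 0) = t₀ ∧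
    (t₀ ∪ t₁ ∪ t₂).filter (fun v => c v = 1) = t₁ ∧
    (t₀ ∪ t₁ ∪ t₂).filter (fun v => c v = 2) = t₂ := by
  refine ⟨?_, ?_, ?_⟩ <;>
    rw [Finset.filter_union, Finset.filter_union]
  · rw [Finset.filter_eq_self.mpr m0,
      Finset.filter_eq_empty_iff.mpr (fun v hv => by simp [m1 v hv]),
      Finset.filter_eq_empty_iff.mpr (fun v hv => by simp [m2 v hv]),
      Finset.union_empty, Finset.union_empty]
  · rw [Finset.filter_eq_self.mpr m1,
      Finset.filter_eq_empty_iff.mpr (fun v hv => by simp [m0 v hv]),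
      Finset.filter_eq_empty_iff.mpr (fun v hv => by simp [m2 v hv]),
      Finset.empty_union, Finset.union_empty]
  · rw [Finset.filter_eq_self.mpr m2,
      Finset.filter_eq_empty_iff.mpr (fun v hv => by simp [m0 v hv]),
      Finset.filter_eq_empty_iff.mpr (fun v hv => by simp [m1 v hv]),
      Finset.empty_union, Finset.empty_union]

variable [Fintype V]

lemma countPattern (c : V → Fin 3) (a₀ a₁ a₂ : ℕ) :
    (Finset.univ.filter fun s : Finset V =>
        Fcnt c s 0 = a₀ ∧ Fcnt c s 1 = a₁ ∧ Fcnt c s 2 = a₂).card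
      = (Finset.univ.filter fun v => c v = 0).card.choose a₀ *
        ((Finset.univ.filter fun v => c v = 1).card.choose a₁ *
         (Finset.univ.filter fun v => c v = 2).card.choose a₂) := by
  rw [← Finset.card_powersetCard, ← Finset.card_powersetCard, ← Finset.card_powersetCard,
    ← Finset.card_product, ← Finset.card_product]
  refine Finset.card_nbij'
    (fun s => (s.filter fun v => c v = 0, (s.filter fun v => c v = 1, s.filter fun v => c v = 2)))
    (fun t => t.1 ∪ t.2.1 ∪ t.2.2) ?_ ?_ ?_ ?_
  · intro s hs
    simp only [Finset.mem_coe, Finset.mem_filter, Finset.mem_univ, true_and] at hs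
    simp only [Finset.mem_coe, Finset.mem_product, Finset.mem_powersetCard]
    refine ⟨⟨fun v hv => ?_, hs.1⟩, ⟨fun v hv => ?_, hs.2.1⟩, fun v hv => ?_, hs.2.2⟩ <;>
      · simp only [Finset.mem_filter] at hv
        simp [hv.2]
  · rintro ⟨t₀, t₁, t₂⟩ ht
    simp only [Finset.mem_coe, Finset.mem_product, Finset.mem_powersetCard] at ht
    obtain ⟨⟨ht₀, hc₀⟩, ⟨ht₁, hc₁⟩, ht₂, hc₂⟩ := ht
    have m0 : ∀ v ∈ t₀, c v = 0 := fun v hv => (Finset.mem_filter.mp (ht₀ hv)).2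
    have m1 : ∀ v ∈ t₁, c v = 1 := fun v hv => (Finset.mem_filter.mp (ht₁ hv)).2
    have m2 : ∀ v ∈ t₂, c v = 2 := fun v hv => (Finset.mem_filter.mp (ht₂ hv)).2
    obtain ⟨e0, e1, e2⟩ := filter_of_levels c m0 m1 m2
    simp only [Finset.mem_coe, Finset.mem_filter, Finset.mem_univ, true_and]
    refine ⟨?_, ?_, ?_⟩
    · show (Finset.filter _ _).card = _; rw [e0]; exact hc₀
    · show (Finset.filter _ _).card = _; rw [e1]; exact hc₁
    · show (Finset.filter _ _).card = _; rw [e2]; exact hc₂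
  · intro s _
    ext v
    simp only [Finset.mem_union, Finset.mem_filter]
    constructor
    · rintro ((h | h) | h) <;> exact h.1
    · intro hv
      rcases fin3cases (c v) with h | h | h
      · exact Or.inl (Or.inl ⟨hv, h⟩)
      · exact Or.inl (Or.inr ⟨hv, h⟩)
      · exact Or.inr ⟨hv, h⟩
  · rintro ⟨t₀, t₁, t₂⟩ ht
    simp only [Finset.mem_coe, Finset.mem_product, Finset.mem_powersetCard] at ht
    obtain ⟨⟨ht₀, _⟩, ⟨ht₁, _⟩, ht₂, _⟩ := ht
    have m0 : ∀ v ∈ t₀, c v = 0 := fun v hv => (Finset.mem_filter.mp (ht₀ hv)).2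
    have m1 : ∀ v ∈ t₁, c v = 1 := fun v hv => (Finset.mem_filter.mp (ht₁ hv)).2
    have m2 : ∀ v ∈ t₂, c v = 2 := fun v hv => (Finset.mem_filter.mp (ht₂ hv)).2
    obtain ⟨e0, e1, e2⟩ := filter_of_levels c m0 m1 m2
    simp only [Prod.mk.injEq]
    exact ⟨e0, e1, e2⟩

lemma pull021C (c : V → Fin 3) (x y z : V) :
    Triad021C (HierAdj c) x y z ↔ Triad021C hadj (c x) (c y) (c z) := Iff.rfl
lemma pull021U (c : V → Fin 3) (x y z : V) :
    Triad021U (HierAdj c) x y z ↔ Triad021U hadj (c x) (c y) (c z) := Iff.rfl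
lemma pull021D (c : V → Fin 3) (x y z : V) :
    Triad021D (HierAdj c) x y z ↔ Triad021D hadj (c x) (c y) (c z) := Iff.rfl
lemma pull003 (c : V → Fin 3) (x y z : V) :
    Triad003 (HierAdj c) x y z ↔ Triad003 hadj (c x) (c y) (c z) := Iff.rfl

lemma iff021C (c : V → Fin 3) (s : Finset V) :
    InducesTriad (Triad021C (HierAdj c)) s ↔
      (Fcnt c s 0 = 1 ∧ Fcnt c s 1 = 1 ∧ Fcnt c s 2 = 1) := by
  constructor
  · rintro ⟨x, y, z, hxy, hxz, hyz, rfl, hT⟩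
    have := (char021C (c x) (c y) (c z)).mp ((pull021C c x y z).mp hT)
    rw [Fcnt_rep c hxy hxz hyz, Fcnt_rep c hxy hxz hyz, Fcnt_rep c hxy hxz hyz]
    exact this
  · rintro ⟨h0, h1, h2⟩
    have hcard : s.card = 3 := by rw [card_split c s, h0, h1, h2]
    obtain ⟨x, y, z, hxy, hxz, hyz, hs, hcx, hcy, hcz⟩ :=
      helper1 c (i := 0) (j := 1) (k := 2) (by decide) (by decide) (by decide) h0 h1 h2 hcard
    exact ⟨x, y, z, hxy, hxz, hyz, hs,
      (pull021C c x y z).mpr (by rw [hcx, hcy, hcz]; decide)⟩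

lemma iff021U (c : V → Fin 3) (s : Finset V) :
    InducesTriad (Triad021U (HierAdj c)) s ↔
      ((Fcnt c s 0 = 2 ∧ Fcnt c s 1 = 1 ∧ Fcnt c s 2 = 0) ∨
       (Fcnt c s 0 = 0 ∧ Fcnt c s 1 = 2 ∧ Fcnt c s 2 = 1)) := by
  constructor
  · rintro ⟨x, y, z, hxy, hxz, hyz, rfl, hT⟩
    have := (char021U (c x) (c y) (c z)).mp ((pull021U c x y z).mp hT)
    rw [Fcnt_rep c hxy hxz hyz, Fcnt_rep c hxy hxz hyz, Fcnt_rep c hxy hxz hyz]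
    exact this
  · rintro (⟨h0, h1, h2⟩ | ⟨h0, h1, h2⟩)
    · have hcard : s.card = 3 := by rw [card_split c s, h0, h1, h2]
      obtain ⟨x, y, z, hxy, hxz, hyz, hs, hcx, hcy, hcz⟩ :=
        helper2 c (i := 0) (j := 1) (by decide) h0 h1 hcard
      exact ⟨x, y, z, hxy, hxz, hyz, hs,
        (pull021U c x y z).mpr (by rw [hcx, hcy, hcz]; decide)⟩
    · have hcard : s.card = 3 := by rw [card_split c s, h0, h1, h2]
      obtain ⟨x, y, z, hxy, hxz, hyz, hs, hcx, hcy, hcz⟩ :=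
        helper2 c (i := 1) (j := 2) (by decide) h1 h2 hcard
      exact ⟨x, y, z, hxy, hxz, hyz, hs,
        (pull021U c x y z).mpr (by rw [hcx, hcy, hcz]; decide)⟩

lemma iff021D (c : V → Fin 3) (s : Finset V) :
    InducesTriad (Triad021D (HierAdj c)) s ↔
      ((Fcnt c s 0 = 1 ∧ Fcnt c s 1 = 2 ∧ Fcnt c s 2 = 0) ∨
       (Fcnt c s 0 = 0 ∧ Fcnt c s 1 = 1 ∧ Fcnt c s 2 = 2)) := by
  constructor
  · rintro ⟨x, y, z, hxy, hxz, hyz, rfl, hT⟩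
    have := (char021D (c x) (c y) (c z)).mp ((pull021D c x y z).mp hT)
    rw [Fcnt_rep c hxy hxz hyz, Fcnt_rep c hxy hxz hyz, Fcnt_rep c hxy hxz hyz]
    exact this
  · rintro (⟨h0, h1, h2⟩ | ⟨h0, h1, h2⟩)
    · have hcard : s.card = 3 := by rw [card_split c s, h0, h1, h2]
      obtain ⟨x, y, z, hxy, hxz, hyz, hs, hcx, hcy, hcz⟩ :=
        helper2 c (i := 1) (j := 0) (by decide) h1 h0 hcard
      exact ⟨x, y, z, hxy, hxz, hyz, hs,
        (pull021D c x y z).mpr (by rw [hcx, hcy, hcz]; decide)⟩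
    · have hcard : s.card = 3 := by rw [card_split c s, h0, h1, h2]
      obtain ⟨x, y, z, hxy, hxz, hyz, hs, hcx, hcy, hcz⟩ :=
        helper2 c (i := 2) (j := 1) (by decide) h2 h1 hcard
      exact ⟨x, y, z, hxy, hxz, hyz, hs,
        (pull021D c x y z).mpr (by rw [hcx, hcy, hcz]; decide)⟩

lemma iff003 (c : V → Fin 3) (s : Finset V) :
    InducesTriad (Triad003 (HierAdj c)) s ↔
      ((Fcnt c s 0 = 3 ∧ Fcnt c s 1 = 0 ∧ Fcnt c s 2 = 0) ∨
       (Fcnt c s 0 = 0 ∧ Fcnt c s 1 = 3 ∧ Fcnt c s 2 = 0) ∨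
       (Fcnt c s 0 = 0 ∧ Fcnt c s 1 = 0 ∧ Fcnt c s 2 = 3) ∨
       (Fcnt c s 0 = 2 ∧ Fcnt c s 1 = 0 ∧ Fcnt c s 2 = 1) ∨
       (Fcnt c s 0 = 1 ∧ Fcnt c s 1 = 0 ∧ Fcnt c s 2 = 2)) := by
  constructor
  · rintro ⟨x, y, z, hxy, hxz, hyz, rfl, hT⟩
    have := (char003 (c x) (c y) (c z)).mp ((pull003 c x y z).mp hT)
    rw [Fcnt_rep c hxy hxz hyz, Fcnt_rep c hxy hxz hyz, Fcnt_rep c hxy hxz hyz]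
    exact this
  · rintro (⟨h0, h1, h2⟩ | ⟨h0, h1, h2⟩ | ⟨h0, h1, h2⟩ | ⟨h0, h1, h2⟩ | ⟨h0, h1, h2⟩) <;>
      have hcard : s.card = 3 := by rw [card_split c s, h0, h1, h2]
    · obtain ⟨x, y, z, hxy, hxz, hyz, hs, hcx, hcy, hcz⟩ := helper3 c (i := 0) h0 hcard
      exact ⟨x, y, z, hxy, hxz, hyz, hs,
        (pull003 c x y z).mpr (by rw [hcx, hcy, hcz]; decide)⟩
    · obtain ⟨x, y, z, hxy, hxz, hyz, hs, hcx, hcy, hcz⟩ := helper3 c (i := 1) h1 hcard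
      exact ⟨x, y, z, hxy, hxz, hyz, hs,
        (pull003 c x y z).mpr (by rw [hcx, hcy, hcz]; decide)⟩
    · obtain ⟨x, y, z, hxy, hxz, hyz, hs, hcx, hcy, hcz⟩ := helper3 c (i := 2) h2 hcard
      exact ⟨x, y, z, hxy, hxz, hyz, hs,
        (pull003 c x y z).mpr (by rw [hcx, hcy, hcz]; decide)⟩
    · obtain ⟨x, y, z, hxy, hxz, hyz, hs, hcx, hcy, hcz⟩ :=
        helper2 c (i := 0) (j := 2) (by decide) h0 h2 hcard
      exact ⟨x, y, z, hxy, hxz, hyz, hs,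
        (pull003 c x y z).mpr (by rw [hcx, hcy, hcz]; decide)⟩
    · obtain ⟨x, y, z, hxy, hxz, hyz, hs, hcx, hcy, hcz⟩ :=
        helper2 c (i := 2) (j := 0) (by decide) h2 h0 hcard
      exact ⟨x, y, z, hxy, hxz, hyz, hs,
        (pull003 c x y z).mpr (by rw [hcx, hcy, hcz]; decide)⟩

end Aux

/-- Triad census of the ideal hierarchical network without complete diagonal blocks. -/
theorem hier_triad_census {V : Type*} [Fintype V] [DecidableEq V]
    (c : V → Fin 3) (n₀ n₁ n₂ : ℕ)
    (h₀ : n₀ = (Finset.univ.filter fun v => c v = 0).card)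
    (h₁ : n₁ = (Finset.univ.filter fun v => c v = 1).card)
    (h₂ : n₂ = (Finset.univ.filter fun v => c v = 2).card) :
    {s : Finset V | InducesTriad (Triad021C (HierAdj c)) s}.ncard = n₀ * n₁ * n₂ ∧
    {s : Finset V | InducesTriad (Triad021U (HierAdj c)) s}.ncard
        = n₀.choose 2 * n₁ + n₁.choose 2 * n₂ ∧
    {s : Finset V | InducesTriad (Triad021D (HierAdj c)) s}.ncard
        = n₀ * n₁.choose 2 + n₁ * n₂.choose 2 ∧
    {s : Finset V | InducesTriad (Triad003 (HierAdj c)) s}.ncard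
        = n₀.choose 3 + n₁.choose 3 + n₂.choose 3 + n₀.choose 2 * n₂ + n₀ * n₂.choose 2 ∧
    (∀ s : Finset V, s.card = 3 →
        InducesTriad (Triad021C (HierAdj c)) s ∨
        InducesTriad (Triad021U (HierAdj c)) s ∨
        InducesTriad (Triad021D (HierAdj c)) s ∨
        InducesTriad (Triad003 (HierAdj c)) s) := by
  classical
  subst h₀ h₁ h₂
  have hset : ∀ (P : Finset V → Prop), {s : Finset V | P s}.ncard
      = (Finset.univ.filter P).card := fun P => by
    rw [← Set.ncard_coe_finset]
    congr 1
    ext s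
    simp
  have hdis : ∀ (a₀ a₁ a₂ b₀ b₁ b₂ : ℕ), (a₀ ≠ b₀ ∨ a₁ ≠ b₁) → Disjoint
      (Finset.univ.filter fun s : Finset V =>
        Fcnt c s 0 = a₀ ∧ Fcnt c s 1 = a₁ ∧ Fcnt c s 2 = a₂)
      (Finset.univ.filter fun s : Finset V =>
        Fcnt c s 0 = b₀ ∧ Fcnt c s 1 = b₁ ∧ Fcnt c s 2 = b₂) := by
    intro a₀ a₁ a₂ b₀ b₁ b₂ h
    rw [Finset.disjoint_left]
    intro s hs ht
    simp only [Finset.mem_filter, Finset.mem_univ, true_and] at hs ht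
    obtain ⟨e1, e2, e3⟩ := hs
    obtain ⟨f1, f2, f3⟩ := ht
    rcases h with h | h <;> omega
  refine ⟨?_, ?_, ?_, ?_, ?_⟩
  · rw [hset]
    have he : (Finset.univ.filter fun s : Finset V => InducesTriad (Triad021C (HierAdj c)) s)
        = Finset.univ.filter fun s => Fcnt c s 0 = 1 ∧ Fcnt c s 1 = 1 ∧ Fcnt c s 2 = 1 := by
      ext s
      simp only [Finset.mem_filter, Finset.mem_univ, true_and]
      exact iff021C c s
    rw [he, countPattern]
    simp only [Nat.choose_one_right]
    ring
  · rw [hset]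
    have he : (Finset.univ.filter fun s : Finset V => InducesTriad (Triad021U (HierAdj c)) s)
        = (Finset.univ.filter fun s : Finset V =>
            Fcnt c s 0 = 2 ∧ Fcnt c s 1 = 1 ∧ Fcnt c s 2 = 0) ∪
          (Finset.univ.filter fun s : Finset V =>
            Fcnt c s 0 = 0 ∧ Fcnt c s 1 = 2 ∧ Fcnt c s 2 = 1) := by
      rw [← Finset.filter_or]
      ext s
      simp only [Finset.mem_filter, Finset.mem_univ, true_and]
      exact iff021U c s
    rw [he, Finset.card_union_of_disjoint (hdis 2 1 0 0 2 1 (by omega)),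
      countPattern, countPattern]
    simp only [Nat.choose_one_right, Nat.choose_zero_right]
    ring
  · rw [hset]
    have he : (Finset.univ.filter fun s : Finset V => InducesTriad (Triad021D (HierAdj c)) s)
        = (Finset.univ.filter fun s : Finset V =>
            Fcnt c s 0 = 1 ∧ Fcnt c s 1 = 2 ∧ Fcnt c s 2 = 0) ∪
          (Finset.univ.filter fun s : Finset V =>
            Fcnt c s 0 = 0 ∧ Fcnt c s 1 = 1 ∧ Fcnt c s 2 = 2) := by
      rw [← Finset.filter_or]
      ext s
      simp only [Finset.mem_filter, Finset.mem_univ, true_and]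
      exact iff021D c s
    rw [he, Finset.card_union_of_disjoint (hdis 1 2 0 0 1 2 (by omega)),
      countPattern, countPattern]
    simp only [Nat.choose_one_right, Nat.choose_zero_right]
    ring
  · rw [hset]
    have he : (Finset.univ.filter fun s : Finset V => InducesTriad (Triad003 (HierAdj c)) s)
        = (Finset.univ.filter fun s : Finset V =>
            Fcnt c s 0 = 3 ∧ Fcnt c s 1 = 0 ∧ Fcnt c s 2 = 0) ∪
          ((Finset.univ.filter fun s : Finset V =>
            Fcnt c s 0 = 0 ∧ Fcnt c s 1 = 3 ∧ Fcnt c s 2 = 0) ∪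
          ((Finset.univ.filter fun s : Finset V =>
            Fcnt c s 0 = 0 ∧ Fcnt c s 1 = 0 ∧ Fcnt c s 2 = 3) ∪
          ((Finset.univ.filter fun s : Finset V =>
            Fcnt c s 0 = 2 ∧ Fcnt c s 1 = 0 ∧ Fcnt c s 2 = 1) ∪
          (Finset.univ.filter fun s : Finset V =>
            Fcnt c s 0 = 1 ∧ Fcnt c s 1 = 0 ∧ Fcnt c s 2 = 2)))) := by
      rw [← Finset.filter_or, ← Finset.filter_or, ← Finset.filter_or, ← Finset.filter_or]
      ext s
      simp only [Finset.mem_filter, Finset.mem_univ, true_and]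
      exact iff003 c s
    rw [he,
      Finset.card_union_of_disjoint (by
        refine Finset.disjoint_union_right.mpr ⟨hdis 3 0 0 0 3 0 (by omega), ?_⟩
        refine Finset.disjoint_union_right.mpr ⟨hdis 3 0 0 0 0 3 (by omega), ?_⟩
        exact Finset.disjoint_union_right.mpr
          ⟨hdis 3 0 0 2 0 1 (by omega), hdis 3 0 0 1 0 2 (by omega)⟩),
      Finset.card_union_of_disjoint (by
        refine Finset.disjoint_union_right.mpr ⟨hdis 0 3 0 0 0 3 (by omega), ?_⟩
        exact Finset.disjoint_union_right.mpr
          ⟨hdis 0 3 0 2 0 1 (by omega), hdis 0 3 0 1 0 2 (by omega)⟩),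
      Finset.card_union_of_disjoint (Finset.disjoint_union_right.mpr
        ⟨hdis 0 0 3 2 0 1 (by omega), hdis 0 0 3 1 0 2 (by omega)⟩),
      Finset.card_union_of_disjoint (hdis 2 0 1 1 0 2 (by omega)),
      countPattern, countPattern, countPattern, countPattern, countPattern]
    simp only [Nat.choose_one_right, Nat.choose_zero_right]
    ring
  · intro s hs
    obtain ⟨x, y, z, hxy, hxz, hyz, rfl⟩ := Finset.card_eq_three.mp hs
    rcases charAll (c x) (c y) (c z) with h | h | h | h
    · exact Or.inl ⟨x, y, z, hxy, hxz, hyz, rfl, (pull021C c x y z).mpr h⟩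
    · exact Or.inr (Or.inl ⟨x, y, z, hxy, hxz, hyz, rfl, (pull021U c x y z).mpr h⟩)
    · exact Or.inr (Or.inr (Or.inl ⟨x, y, z, hxy, hxz, hyz, rfl, (pull021D c x y z).mpr h⟩))
    · exact Or.inr (Or.inr (Or.inr ⟨x, y, z, hxy, hxz, hyz, rfl, (pull003 c x y z).mpr h⟩))
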